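/- Let p be a prime, G a group of order p, and M an abelian group equipped with an action of G by group automorphisms. Suppose M is generated, as an abelian group, by at most r elements. Then the first group cohomology H^1(G, M) has cardinality at most p^r, and the quotient M^G / N_G(M) has cardinality at most p^r, where M^G is the subgroup of G-fixed points and N_G : M → M is the norm map N_G(m) := Σ_{σ ∈ G} σ·m. -/

import Mathlib

lemma aux_zsmul_eq (p : ℕ) [NeZero p] {A : Type*} [AddCommGroup A]
    (htor : ∀ a : A, p • a = 0) (z : ℤ) (x : A) :
    (((z : ZMod p)).val : ℤ) • x = z • x := by
  have h0 : ((((z : ZMod p).val : ℤ) - z : ℤ) : ZMod p) = 0 := by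
    simp [Int.cast_sub, ZMod.natCast_val, ZMod.cast_id]
  obtain ⟨k, hk⟩ := (ZMod.intCast_zmod_eq_zero_iff_dvd _ p).1 h0
  have h : (((z : ZMod p).val : ℤ)) • x - z • x = ((p : ℤ) * k) • x := by
    rw [← sub_smul, hk]
  rw [mul_comm, mul_smul] at h
  have h2 : k • ((p:ℤ) • x) = 0 := by rw [natCast_zsmul, htor, smul_zero]
  rw [h2, sub_eq_zero] at h
  exact h

lemma aux_card (p : ℕ) (hp : 0 < p) {n : ℕ} {A : Type*} [AddCommGroup A]
    (g : Fin n → A) (hg : ∀ a : A, a ∈ AddSubgroup.closure (Set.range g))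
    (htor : ∀ a : A, p • a = 0) : Nat.card A ≤ p ^ n := by
  haveI : NeZero p := ⟨hp.ne'⟩
  set L : (Fin n → ℤ) → A := fun c => ∑ i, c i • g i with hL
  have hLsurj : ∀ a : A, ∃ c, L c = a := by
    intro a
    induction hg a using AddSubgroup.closure_induction with
    | mem x hx =>
      obtain ⟨i, rfl⟩ := hx
      exact ⟨Pi.single i 1, by simp [hL, Pi.single_apply, Finset.sum_ite_eq']⟩
    | zero => exact ⟨0, by simp [hL]⟩
    | add x y hx hy ihx ihy =>
      obtain ⟨c, rfl⟩ := ihx; obtain ⟨d, rfl⟩ := ihy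
      exact ⟨c + d, by simp [hL, add_smul, Finset.sum_add_distrib]⟩
    | neg x hx ihx =>
      obtain ⟨c, rfl⟩ := ihx
      exact ⟨-c, by simp [hL, Finset.sum_neg_distrib]⟩
  have hsurj : Function.Surjective (fun c : Fin n → ZMod p => L (fun i => ((c i).val : ℤ))) := by
    intro a
    obtain ⟨c, rfl⟩ := hLsurj a
    refine ⟨fun i => (c i : ZMod p), ?_⟩
    simp only [hL]
    exact Finset.sum_congr rfl fun i _ => aux_zsmul_eq p htor (c i) (g i)
  calc Nat.card A ≤ Nat.card (Fin n → ZMod p) := Nat.card_le_card_of_surjective _ hsurj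
    _ = p ^ n := by
        rw [Nat.card_fun, Nat.card_zmod, Nat.card_eq_fintype_card, Fintype.card_fin]
lemma aux_sub {M : Type*} [AddCommGroup M] {r : ℕ} (g : Fin r → M)
    (hgen : ∀ m : M, m ∈ AddSubgroup.closure (Set.range g)) (S : AddSubgroup M) :
    ∃ (n : ℕ) (h : Fin n → M), n ≤ r ∧ (∀ i, h i ∈ S) ∧
      ∀ s ∈ S, s ∈ AddSubgroup.closure (Set.range h) := by
  classical
  set π : (Fin r → ℤ) →ₗ[ℤ] M :=
    { toFun := fun c => ∑ i, c i • g i,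
      map_add' := by intro x y; simp [add_smul, Finset.sum_add_distrib],
      map_smul' := by intro c x; simp [Finset.smul_sum, mul_smul] } with hπdef
  have hπ : Function.Surjective π := by
    intro m
    induction hgen m using AddSubgroup.closure_induction with
    | mem x hx =>
      obtain ⟨i, rfl⟩ := hx
      exact ⟨Pi.single i 1, by simp [hπdef, Pi.single_apply, Finset.sum_ite_eq']⟩
    | zero => exact ⟨0, by simp [hπdef]⟩
    | add x y hx hy ihx ihy =>
      obtain ⟨c, rfl⟩ := ihx; obtain ⟨d, rfl⟩ := ihy
      exact ⟨c + d, by rw [map_add]⟩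
    | neg x hx ihx =>
      obtain ⟨c, rfl⟩ := ihx
      exact ⟨-c, by rw [map_neg]⟩
  set S' : Submodule ℤ (Fin r → ℤ) := (AddSubgroup.toIntSubmodule S).comap π with hS'
  obtain ⟨n, b⟩ := Submodule.basisOfPid (Pi.basisFun ℤ (Fin r)) S'
  have hn : n ≤ r := by
    have h1 : Module.finrank ℤ S' = n := by
      rw [Module.finrank_eq_card_basis b, Fintype.card_fin]
    have h2 : Module.finrank ℤ S' ≤ Module.finrank ℤ (Fin r → ℤ) := S'.finrank_le
    rw [h1, Module.finrank_fin_fun] at h2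
    exact h2
  refine ⟨n, fun i => π (b i : Fin r → ℤ), hn, fun i => (b i).2, fun s hs => ?_⟩
  obtain ⟨c, rfl⟩ := hπ s
  have hc : (⟨c, hs⟩ : S') ∈ Submodule.span ℤ (Set.range b) := by
    rw [b.span_eq]; trivial
  have key := Submodule.span_induction
    (p := fun (x : S') _ => (π (x : Fin r → ℤ) ∈
      AddSubgroup.closure (Set.range fun i => π (b i : Fin r → ℤ))))
    (fun x hx => ?_) ?_ (fun x y _ _ hx hy => ?_) (fun t x _ hx => ?_) hc
  · exact key
  · obtain ⟨i, rfl⟩ := hx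
    exact AddSubgroup.subset_closure ⟨i, rfl⟩
  · simp only [Submodule.coe_zero, map_zero]
    exact zero_mem _
  · simp only [Submodule.coe_add, map_add]
    exact add_mem hx hy
  · simp only [Submodule.coe_smul, map_smul]
    exact zsmul_mem hx t

lemma aux_main (p : ℕ) (hp : 0 < p) {r : ℕ} {M : Type*} [AddCommGroup M]
    (g : Fin r → M) (hgen : ∀ m : M, m ∈ AddSubgroup.closure (Set.range g))
    (S : AddSubgroup M) {A : Type*} [AddCommGroup A]
    (φ : S →+ A) (hφ : Function.Surjective φ)
    (htor : ∀ a : A, p • a = 0) : Nat.card A ≤ p ^ r := by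
  obtain ⟨n, h, hn, hmem, hgen'⟩ := aux_sub g hgen S
  set h' : Fin n → S := fun i => ⟨h i, hmem i⟩ with hh'
  have step : Nat.card A ≤ p ^ n := by
    refine aux_card p hp (fun i => φ (h' i)) (fun a => ?_) htor
    obtain ⟨s, rfl⟩ := hφ a
    have hs : (s : M) ∈ (AddSubgroup.closure (Set.range h')).map S.subtype := by
      rw [AddMonoidHom.map_closure]
      have : S.subtype '' Set.range h' = Set.range h := by
        rw [← Set.range_comp]
        rfl
      rw [this]
      exact hgen' s s.2
    obtain ⟨t, ht, hts⟩ := hs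
    have hts' : t = s := Subtype.ext hts
    subst hts'
    have : φ t ∈ (AddSubgroup.closure (Set.range h')).map φ :=
      AddSubgroup.mem_map.2 ⟨t, ht, rfl⟩
    rw [AddMonoidHom.map_closure, ← Set.range_comp] at this
    exact this
  exact step.trans (Nat.pow_le_pow_right hp hn)

/-- Let `p` be a prime, `G` a group of order `p`, and `M` an abelian
group with a `G`-action by automorphisms, generated (as an abelian group) by at most `r`
elements.  Then `|H¹(G, M)| ≤ p^r` and `|M^G / N_G(M)| ≤ p^r`, where `N_G(m) = ∑_σ σ•m`
is the norm map. -/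
theorem stmt18 (p : ℕ) (hp : p.Prime) (G : Type) [Group G] [Fintype G]
    (hG : Fintype.card G = p)
    (M : Type) [AddCommGroup M] [DistribMulAction G M]
    (r : ℕ)
    (hgen : ∃ S : Finset M, S.card ≤ r ∧ AddSubgroup.closure (S : Set M) = ⊤) :
    Nat.card (groupCohomology.H1 (Rep.ofDistribMulAction ℤ G M)) ≤ p ^ r ∧
    Nat.card ((FixedPoints.addSubgroup G M) ⧸
        ((∑ σ : G, DistribMulAction.toAddMonoidHom M σ).range.addSubgroupOf (FixedPoints.addSubgroup G M)))
      ≤ p ^ r := by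
  classical
  obtain ⟨Sf, hcard, hclos⟩ := hgen
  set g : Fin r → M := fun i => if h : (i : ℕ) < Sf.card then (Sf.equivFin.symm ⟨i, h⟩ : M) else 0
    with hg
  have hgenM : ∀ m : M, m ∈ AddSubgroup.closure (Set.range g) := by
    have hsub : (Sf : Set M) ⊆ Set.range g := by
      intro s hs
      refine ⟨⟨(Sf.equivFin ⟨s, hs⟩ : ℕ), lt_of_lt_of_le (Sf.equivFin ⟨s, hs⟩).2 hcard⟩, ?_⟩
      simp only [hg]
      rw [dif_pos (Sf.equivFin ⟨s, hs⟩).2]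
      rw [Fin.eta, Equiv.symm_apply_apply]
    intro m
    have : AddSubgroup.closure (Sf : Set M) ≤ AddSubgroup.closure (Set.range g) :=
      AddSubgroup.closure_mono hsub
    exact this (hclos ▸ AddSubgroup.mem_top m)
  constructor
  · -- H¹ part
    haveI : Fact p.Prime := ⟨hp⟩
    haveI : IsCyclic G := isCyclic_of_prime_card (by rw [Nat.card_eq_fintype_card, hG])
    obtain ⟨σ, hσ⟩ := IsCyclic.exists_generator (α := G)
    set A := Rep.ofDistribMulAction ℤ G M with hA
    set ev : groupCohomology.cocycles₁ A →+ M :=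
      { toFun := fun f => f σ, map_zero' := rfl, map_add' := fun f g => rfl } with hev
    have hinj : Function.Injective ev := by
      rw [injective_iff_map_eq_zero]
      intro f hf
      replace hf : (f σ : M) = 0 := hf
      have hpow : ∀ k : ℕ, f (σ ^ k) = 0 := by
        intro k
        induction k with
        | zero => simpa using groupCohomology.cocycles₁_map_one f
        | succ k ih =>
          have := (groupCohomology.mem_cocycles₁_iff (A := A) f).1 f.2 (σ ^ k) σ
          rw [pow_succ, this, hf, ih, map_zero, add_zero]
      have hz : ∀ g' : G, f g' = 0 := by
        intro g'
        obtain ⟨k, rfl⟩ := mem_powers_iff_mem_zpowers.mpr (hσ g')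
        exact hpow k
      exact groupCohomology.cocycles₁_ext fun g' => by rw [hz g']; rfl
    set e := AddMonoidHom.ofInjective hinj with he
    set φ : ev.range →+ groupCohomology.H1 A :=
      ((groupCohomology.H1π A).hom.toAddMonoidHom).comp e.symm.toAddMonoidHom
      with hφ
    have hsurj : Function.Surjective φ :=
      ((ModuleCat.epi_iff_surjective (groupCohomology.H1π A)).1 inferInstance).comp
        e.symm.surjective
    have htor : ∀ x : groupCohomology.H1 A, p • x = 0 := by
      intro x
      induction x using groupCohomology.H1_induction_on with | h f => ?_
      rw [← map_nsmul, groupCohomology.H1π_eq_zero_iff]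
      refine ⟨-(∑ h : G, f h), funext fun g' => ?_⟩
      change A.ρ g' (-(∑ h : G, f h)) - -(∑ h : G, f h) = (p • f : groupCohomology.cocycles₁ A) g'
      have hρ : ∀ h : G, A.ρ g' (f h) = f (g' * h) - f g' := by
        intro h
        rw [(groupCohomology.mem_cocycles₁_iff (A := A) f).1 f.2 g' h]
        abel
      rw [map_neg, sub_neg_eq_add, map_sum]
      rw [Finset.sum_congr rfl fun h _ => hρ h, Finset.sum_sub_distrib]
      rw [Fintype.sum_equiv (Equiv.mulLeft g') (fun h => f (g' * h)) (fun h => f h)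
        (fun h => rfl)]
      rw [Finset.sum_const, Finset.card_univ, hG]
      have hsmul : ((p • f : groupCohomology.cocycles₁ A)) g' = p • (f g') := rfl
      rw [hsmul]
      abel
    exact aux_main p hp.pos g hgenM ev.range φ hsurj htor
  · -- H^0 hat part
    set N : AddSubgroup (FixedPoints.addSubgroup G M) :=
      (∑ σ : G, DistribMulAction.toAddMonoidHom M σ).range.addSubgroupOf (FixedPoints.addSubgroup G M) with hN
    refine aux_main p hp.pos g hgenM (FixedPoints.addSubgroup G M) (QuotientAddGroup.mk' N)
      (QuotientAddGroup.mk'_surjective N) ?_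
    intro a
    obtain ⟨x, rfl⟩ := QuotientAddGroup.mk'_surjective N a
    rw [← map_nsmul]
    rw [show (QuotientAddGroup.mk' N) (p • x) = ((p • x : (FixedPoints.addSubgroup G M)) : (FixedPoints.addSubgroup G M) ⧸ N) from rfl,
      QuotientAddGroup.eq_zero_iff, AddSubgroup.mem_addSubgroupOf]
    refine ⟨(x : M), ?_⟩
    have : (∑ σ : G, DistribMulAction.toAddMonoidHom M σ) (x : M)
        = ∑ σ : G, σ • (x : M) := by
      simp [AddMonoidHom.finset_sum_apply]
    rw [this]
    have hfix : ∀ σ : G, σ • (x : M) = (x : M) := x.2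
    rw [Finset.sum_congr rfl fun σ _ => hfix σ]
    rw [Finset.sum_const, Finset.card_univ, hG]
    rfl
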